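/- Let t be a trace containing events of type a at strictly increasing timestamps o_1 < o_2 < ... < o_m (m ≥ 2). The set of event-pairs generated for et-pair (a,a) with the reuse rule is exactly {(o_j, o_{j+1}) : 1 ≤ j ≤ m−1}, and this set has the property that for every v ≥ 0, there exist two events of type a in t within time v of each other (i.e., ∃ j < k with o_k.ts − o_j.ts ≤ v) if and only if some generated pair (o_j, o_{j+1}) satisfies o_{j+1}.ts − o_j.ts ≤ v. -/

import Mathlib

structure Event where
  type : ℕ
  ts : ℤ
deriving DecidableEq

/-- Let `os` (with `|os| = m ≥ 2`) be the type-`a` events of a trace in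
strictly increasing timestamp order.  The event-pairs generated for the et-pair `(a,a)`
with the reuse rule (`os.zip os.tail`) are exactly the consecutive pairs
`(o_j, o_{j+1})`, and for every `v ≥ 0` there exist two type-`a` events within time `v`
of each other iff some generated (consecutive) pair has gap at most `v`. -/
theorem stmt5 (t : List Event) (ht : t.Chain' (fun e1 e2 => e1.ts < e2.ts)) (a : ℕ)
    (os : List Event) (hos : os = t.filter (fun ev => decide (ev.type = a)))
    (hm : 2 ≤ os.length) :
    (∀ pr : Event × Event, pr ∈ os.zip os.tail ↔
      ∃ j, ∃ hj : j + 1 < os.length,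
        pr = (os.get ⟨j, Nat.lt_of_succ_lt hj⟩, os.get ⟨j + 1, hj⟩)) ∧
    (∀ v : ℤ, 0 ≤ v →
      ((∃ j k, ∃ hj : j < os.length, ∃ hk : k < os.length, j < k ∧
          (os.get ⟨k, hk⟩).ts - (os.get ⟨j, hj⟩).ts ≤ v) ↔
        (∃ j, ∃ hj : j + 1 < os.length,
          (os.get ⟨j + 1, hj⟩).ts - (os.get ⟨j, Nat.lt_of_succ_lt hj⟩).ts ≤ v))) := by
  haveI : IsTrans Event (fun e1 e2 => e1.ts < e2.ts) := ⟨fun _ _ _ => lt_trans⟩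
  have hchain : os.Chain' (fun e1 e2 => e1.ts < e2.ts) := by
    rw [hos]; exact ht.sublist (List.filter_sublist (l := t))
  have hpw : os.Pairwise (fun e1 e2 => e1.ts < e2.ts) :=
    List.isChain_iff_pairwise.mp hchain
  have hmono : ∀ i k (hi : i < os.length) (hk : k < os.length), i ≤ k →
      (os.get ⟨i, hi⟩).ts ≤ (os.get ⟨k, hk⟩).ts := by
    intro i k hi hk hik
    rcases eq_or_lt_of_le hik with h | h
    · subst h; rfl
    · exact le_of_lt (List.pairwise_iff_get.mp hpw ⟨i, hi⟩ ⟨k, hk⟩ h)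
  constructor
  · intro pr
    rw [List.mem_iff_get]
    constructor
    · rintro ⟨⟨i, hi⟩, hget⟩
      have hi' : i + 1 < os.length := by
        have := hi; simp [List.length_zip, Nat.lt_min, List.length_tail] at this; omega
      refine ⟨i, hi', ?_⟩
      rw [← hget]
      rw [List.get_eq_getElem, List.getElem_zip]
      ext <;> simp [List.get_tail]
    · rintro ⟨j, hj, hpr⟩
      have hj' : j < (os.zip os.tail).length := by
        simp [List.length_zip, Nat.lt_min, List.length_tail]
        omega
      refine ⟨⟨j, hj'⟩, ?_⟩
      rw [List.get_eq_getElem, List.getElem_zip, hpr]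
      ext <;> simp [List.get_tail]
  · intro v hv
    constructor
    · rintro ⟨j, k, hj, hk, hjk, hle⟩
      have hj1 : j + 1 < os.length := by omega
      refine ⟨j, hj1, ?_⟩
      have := hmono (j+1) k hj1 hk (by omega)
      omega
    · rintro ⟨j, hj, hle⟩
      exact ⟨j, j+1, Nat.lt_of_succ_lt hj, hj, Nat.lt_succ_self j, hle⟩
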